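/- As n → ∞, the sequence ϑ_n / ∏_{k=2}^n ζ(k) converges to 1/(ζ(6) · ∏_{k=4}^∞ ζ(k)) (≈ 0.85). -/

import Mathlib

open Filter

/-- `ϑ_n`: the product over all primes `p` of `1 + (p^(n-1) - 1)/(p^(n+1) - p^n)`. -/
noncomputable def thetaN (n : ℕ) : ℝ :=
  ∏' p : Nat.Primes, (1 + ((p : ℝ) ^ (n - 1) - 1) / ((p : ℝ) ^ (n + 1) - (p : ℝ) ^ n))

/-- The Riemann zeta function at a natural number `k`, as the real series `∑ m ≥ 1, m⁻ᵏ`. -/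
noncomputable def zetaNat (k : ℕ) : ℝ :=
  ∑' m : ℕ, 1 / (m + 1 : ℝ) ^ k

namespace CocyclicAux

lemma neg_log_one_sub_le {t : ℝ} (h0 : 0 ≤ t) (h2 : t ≤ 1/2) :
    -Real.log (1 - t) ≤ 2 * t := by
  have h1 : (0:ℝ) < 1 - t := by linarith
  have h3 : (1:ℝ) + 2*t ≤ Real.exp (2*t) := by
    have := Real.add_one_le_exp (2*t); linarith
  have h5 : Real.exp (-(2*t)) ≤ ((1:ℝ)+2*t)⁻¹ := by
    rw [Real.exp_neg]
    exact inv_anti₀ (by linarith) h3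
  have h6 : ((1:ℝ)+2*t)⁻¹ ≤ 1 - t := by
    rw [inv_eq_one_div, div_le_iff₀ (by linarith)]
    nlinarith
  have := (Real.le_log_iff_exp_le h1).mpr (h5.trans h6)
  linarith

lemma one_sub_sum_le_prod_one_sub (s : Finset ℕ) (a : ℕ → ℝ) (h0 : ∀ k ∈ s, 0 ≤ a k)
    (h1 : ∀ k ∈ s, a k ≤ 1) :
    1 - ∑ k ∈ s, a k ≤ ∏ k ∈ s, (1 - a k) := by
  classical
  induction s using Finset.induction_on with
  | empty => simp
  | @insert k s hk ih =>
    rw [Finset.prod_insert hk, Finset.sum_insert hk]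
    have hs0 : ∀ j ∈ s, 0 ≤ a j := fun j hj => h0 j (Finset.mem_insert_of_mem hj)
    have hs1 : ∀ j ∈ s, a j ≤ 1 := fun j hj => h1 j (Finset.mem_insert_of_mem hj)
    have IH := ih hs0 hs1
    have hak0 := h0 k (Finset.mem_insert_self k s)
    have hak1 := h1 k (Finset.mem_insert_self k s)
    have hsum : 0 ≤ ∑ j ∈ s, a j := Finset.sum_nonneg hs0
    have hmul := mul_le_mul_of_nonneg_left IH (by linarith : (0:ℝ) ≤ 1 - a k)
    nlinarith

lemma hasProd_exp_tsum_log {ι : Type*} {f : ι → ℝ} (hpos : ∀ i, 0 < f i)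
    (h : Summable fun i => Real.log (f i)) :
    HasProd f (Real.exp (∑' i, Real.log (f i))) := by
  have H := h.hasSum.rexp
  have hfe : (Real.exp ∘ fun i => Real.log (f i)) = f := funext fun i => Real.exp_log (hpos i)
  rwa [hfe] at H

lemma tprod_eq_exp_tsum_log {ι : Type*} {f : ι → ℝ} (hpos : ∀ i, 0 < f i)
    (h : Summable fun i => Real.log (f i)) :
    ∏' i, f i = Real.exp (∑' i, Real.log (f i)) :=
  (hasProd_exp_tsum_log hpos h).tprod_eq

lemma multipliable_of_summable_log {ι : Type*} {f : ι → ℝ} (hpos : ∀ i, 0 < f i)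
    (h : Summable fun i => Real.log (f i)) : Multipliable f :=
  ⟨_, hasProd_exp_tsum_log hpos h⟩

noncomputable def xp (p : Nat.Primes) : ℝ := ((p : ℕ) : ℝ)⁻¹

lemma two_le_p (p : Nat.Primes) : (2:ℝ) ≤ ((p : ℕ) : ℝ) := by exact_mod_cast p.prop.two_le

lemma xp_pos (p : Nat.Primes) : 0 < xp p := by
  have := two_le_p p; rw [xp]; positivity

lemma xp_le_half (p : Nat.Primes) : xp p ≤ 1/2 := by
  rw [xp]
  rw [show (1:ℝ)/2 = 2⁻¹ by norm_num]
  exact inv_anti₀ (by norm_num) (two_le_p p)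

lemma xp_lt_one (p : Nat.Primes) : xp p < 1 := (xp_le_half p).trans_lt (by norm_num)

lemma xpk_nonneg (p : Nat.Primes) (k : ℕ) : 0 ≤ xp p ^ k := pow_nonneg (xp_pos p).le _

lemma xpk_le_half (p : Nat.Primes) {k : ℕ} (hk : 1 ≤ k) : xp p ^ k ≤ 1/2 := by
  calc xp p ^ k ≤ xp p ^ 1 :=
        pow_le_pow_of_le_one (xp_pos p).le (xp_lt_one p).le hk
    _ = xp p := pow_one _
    _ ≤ 1/2 := xp_le_half p

lemma xpk_le_sq (p : Nat.Primes) {k : ℕ} (hk : 2 ≤ k) : xp p ^ k ≤ xp p ^ 2 :=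
  pow_le_pow_of_le_one (xp_pos p).le (xp_lt_one p).le hk

lemma one_sub_xpk_pos (p : Nat.Primes) {k : ℕ} (hk : 1 ≤ k) : 0 < 1 - xp p ^ k := by
  have := xpk_le_half p hk; linarith

/-- `ℓ p k = -log(1 - p^{-k})`. -/
noncomputable def ell (p : Nat.Primes) (k : ℕ) : ℝ := -Real.log (1 - xp p ^ k)

lemma ell_nonneg (p : Nat.Primes) {k : ℕ} (hk : 1 ≤ k) : 0 ≤ ell p k := by
  have h1 := one_sub_xpk_pos p hk
  have h2 : 1 - xp p ^ k ≤ 1 := by have := xpk_nonneg p k; linarith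
  have := Real.log_nonpos h1.le h2
  simp only [ell]; linarith

lemma ell_le (p : Nat.Primes) {k : ℕ} (hk : 1 ≤ k) : ell p k ≤ 2 * xp p ^ k :=
  neg_log_one_sub_le (xpk_nonneg p k) (xpk_le_half p hk)

lemma summable_xp_sq : Summable (fun p : Nat.Primes => xp p ^ 2) := by
  have h : Summable (fun n : ℕ => ((n : ℝ) ^ 2)⁻¹) := Real.summable_nat_pow_inv.mpr one_lt_two
  have h2 := h.comp_injective Nat.Primes.coe_nat_injective
  refine h2.congr fun p => ?_
  simp [xp, Function.comp, inv_pow]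

lemma summable_ell {k : ℕ} (hk : 2 ≤ k) : Summable (fun p : Nat.Primes => ell p k) := by
  refine Summable.of_nonneg_of_le (fun p => ell_nonneg p (by omega))
    (fun p => ?_) (summable_xp_sq.mul_left 2)
  calc ell p k ≤ 2 * xp p ^ k := ell_le p (by omega)
    _ ≤ 2 * xp p ^ 2 := by nlinarith [xpk_le_sq p hk]

/-- Euler-product representation of `zetaNat`. -/
lemma zetaNat_eq_exp {k : ℕ} (hk : 2 ≤ k) :
    zetaNat k = Real.exp (∑' p : Nat.Primes, ell p k) := by
  have hk0 : k ≠ 0 := by omega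
  set f : ℕ →*₀ ℝ :=
    { toFun := fun n => ((n : ℝ) ^ k)⁻¹
      map_zero' := by simp [zero_pow hk0]
      map_one' := by simp
      map_mul' := by intro m n; push_cast; rw [mul_pow, mul_inv] }
  have hsum : Summable fun n => ‖f n‖ := by
    refine (Real.summable_nat_pow_inv.mpr (by omega : 1 < k)).congr fun n => ?_
    simp only [f, MonoidWithZeroHom.coe_mk, ZeroHom.coe_mk]
    rw [Real.norm_eq_abs, abs_of_nonneg (by positivity)]
  have hEuler := EulerProduct.eulerProduct_completely_multiplicative_hasProd hsum
  have htsum : ∑' n : ℕ, f n = zetaNat k := by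
    have hs : Summable (fun n : ℕ => f n) := hsum.of_norm
    rw [Summable.tsum_eq_zero_add hs]
    simp only [f, MonoidWithZeroHom.coe_mk, ZeroHom.coe_mk, Nat.cast_zero, zero_pow hk0,
      inv_zero, zero_add, zetaNat]
    refine tsum_congr fun m => ?_
    push_cast
    rw [one_div]
  rw [htsum] at hEuler
  have hfx : ∀ p : Nat.Primes, (1 - f (p : ℕ))⁻¹ = (1 - xp p ^ k)⁻¹ := by
    intro p
    simp only [f, MonoidWithZeroHom.coe_mk, ZeroHom.coe_mk, xp, inv_pow]
  rw [show (fun p : Nat.Primes => (1 - f (p : ℕ))⁻¹) = fun p => (1 - xp p ^ k)⁻¹ from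
    funext hfx] at hEuler
  have hlog : ∀ p : Nat.Primes, Real.log ((1 - xp p ^ k)⁻¹) = ell p k := by
    intro p; rw [Real.log_inv, ell]
  have hsl : Summable fun p : Nat.Primes => Real.log ((1 - xp p ^ k)⁻¹) :=
    (summable_ell hk).congr fun p => (hlog p).symm
  have hw := hasProd_exp_tsum_log (f := fun p : Nat.Primes => (1 - xp p ^ k)⁻¹)
    (fun p => inv_pos.mpr (one_sub_xpk_pos p (by omega))) hsl
  have := hEuler.unique hw
  rw [this]
  congr 1
  exact tsum_congr hlog




/-! ### Per-prime sequence functions -/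

noncomputable def Ath (n : ℕ) (p : Nat.Primes) : ℝ :=
  1 + xp p ^ 2 * (1 - xp p ^ (n - 1)) / (1 - xp p)

noncomputable def Cth (n : ℕ) (p : Nat.Primes) : ℝ :=
  ∏ k ∈ Finset.Icc 2 n, (1 - xp p ^ k)

noncomputable def Ainf (p : Nat.Primes) : ℝ := 1 + xp p ^ 2 / (1 - xp p)

noncomputable def Cinf (p : Nat.Primes) : ℝ := ∏' i : ℕ, (1 - xp p ^ (2 + i))

lemma one_sub_xp_pos (p : Nat.Primes) : 0 < 1 - xp p := by
  have := xp_le_half p; linarith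

lemma one_sub_xp_inv_le_two (p : Nat.Primes) : (1 - xp p)⁻¹ ≤ 2 := by
  rw [show (2:ℝ) = (1/2)⁻¹ by norm_num]
  exact inv_anti₀ (by norm_num) (by have := xp_le_half p; linarith)

lemma xp_sq_le_quarter (p : Nat.Primes) : xp p ^ 2 ≤ 1/4 := by
  have h1 := xp_le_half p
  have h0 := (xp_pos p).le
  nlinarith

lemma Ath_ge_one (n : ℕ) (p : Nat.Primes) : 1 ≤ Ath n p := by
  have h1 : xp p ^ (n-1) ≤ 1 := pow_le_one₀ (xp_pos p).le (xp_lt_one p).le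
  have h2 : 0 ≤ xp p ^ 2 * (1 - xp p ^ (n-1)) / (1 - xp p) := by
    apply div_nonneg _ (one_sub_xp_pos p).le
    have := xpk_nonneg p 2
    nlinarith
  rw [Ath]; linarith

lemma Ath_le (n : ℕ) (p : Nat.Primes) : Ath n p ≤ 1 + 2 * xp p ^ 2 := by
  rw [Ath]
  have h0 : 0 ≤ xp p ^ (n-1) := xpk_nonneg p _
  have h2 : xp p ^ 2 * (1 - xp p ^ (n-1)) / (1 - xp p)
      ≤ xp p ^ 2 * (1 - xp p)⁻¹ := by
    rw [div_eq_mul_inv]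
    have hi : 0 ≤ (1 - xp p)⁻¹ := (inv_pos.mpr (one_sub_xp_pos p)).le
    have h4 := xpk_nonneg p 2
    nlinarith [mul_nonneg (mul_nonneg h4 hi) h0]
  have h3 : xp p ^ 2 * (1 - xp p)⁻¹ ≤ xp p ^ 2 * 2 := by
    have := one_sub_xp_inv_le_two p
    have := xpk_nonneg p 2
    nlinarith
  linarith

lemma Ath_pos (n : ℕ) (p : Nat.Primes) : 0 < Ath n p :=
  lt_of_lt_of_le one_pos (Ath_ge_one n p)

lemma log_Ath_nonneg (n : ℕ) (p : Nat.Primes) : 0 ≤ Real.log (Ath n p) :=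
  Real.log_nonneg (Ath_ge_one n p)

lemma log_Ath_le (n : ℕ) (p : Nat.Primes) : Real.log (Ath n p) ≤ 2 * xp p ^ 2 := by
  have := Real.log_le_sub_one_of_pos (Ath_pos n p)
  have := Ath_le n p
  linarith

lemma sum_xpk_Icc_le (p : Nat.Primes) (n : ℕ) :
    ∑ k ∈ Finset.Icc 2 n, xp p ^ k ≤ 2 * xp p ^ 2 := by
  rw [← Finset.Ico_add_one_right_eq_Icc, Finset.sum_Ico_eq_sum_range]
  have hsum : Summable (fun i : ℕ => xp p ^ 2 * xp p ^ i) :=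
    (summable_geometric_of_lt_one (xp_pos p).le (xp_lt_one p)).mul_left _
  have h1 : ∑ i ∈ Finset.range (n+1-2), xp p ^ (2+i)
      = ∑ i ∈ Finset.range (n+1-2), xp p ^ 2 * xp p ^ i :=
    Finset.sum_congr rfl fun i _ => by rw [pow_add]
  rw [h1]
  have h2 := Summable.sum_le_tsum (Finset.range (n+1-2)) (fun i _ => mul_nonneg (xpk_nonneg p 2) (xpk_nonneg p i)) hsum
  have h3 : ∑' i : ℕ, xp p ^ 2 * xp p ^ i = xp p ^ 2 * (1 - xp p)⁻¹ := by
    rw [tsum_mul_left, tsum_geometric_of_lt_one (xp_pos p).le (xp_lt_one p)]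
  have h4 : xp p ^ 2 * (1 - xp p)⁻¹ ≤ 2 * xp p ^ 2 := by
    have := one_sub_xp_inv_le_two p
    have := xpk_nonneg p 2
    nlinarith
  rw [h3] at h2
  linarith

lemma Cth_le_one (n : ℕ) (p : Nat.Primes) : Cth n p ≤ 1 := by
  apply Finset.prod_le_one
  · intro k hk
    have : 2 ≤ k := (Finset.mem_Icc.mp hk).1
    exact (one_sub_xpk_pos p (by omega)).le
  · intro k _
    have := xpk_nonneg p k
    linarith

lemma Cth_ge (n : ℕ) (p : Nat.Primes) : 1 - 2 * xp p ^ 2 ≤ Cth n p := by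
  have h0 := one_sub_sum_le_prod_one_sub (Finset.Icc 2 n) (fun k => xp p ^ k)
    (fun k _ => xpk_nonneg p k)
    (fun k hk => by
      have := xpk_le_half p (show 1 ≤ k by have := (Finset.mem_Icc.mp hk).1; omega)
      linarith)
  have := sum_xpk_Icc_le p n
  calc 1 - 2 * xp p ^ 2 ≤ 1 - ∑ k ∈ Finset.Icc 2 n, xp p ^ k := by linarith
    _ ≤ Cth n p := h0

lemma Cth_pos (n : ℕ) (p : Nat.Primes) : 0 < Cth n p := by
  have h := Cth_ge n p
  have := xp_sq_le_quarter p
  linarith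

lemma log_Cth_nonpos (n : ℕ) (p : Nat.Primes) : Real.log (Cth n p) ≤ 0 :=
  Real.log_nonpos (Cth_pos n p).le (Cth_le_one n p)

lemma log_Cth_ge (n : ℕ) (p : Nat.Primes) : -(4 * xp p ^ 2) ≤ Real.log (Cth n p) := by
  have hq := xp_sq_le_quarter p
  have h2 : (0:ℝ) < 1 - 2 * xp p ^ 2 := by linarith
  have hmono := Real.log_le_log h2 (Cth_ge n p)
  have hb : -Real.log (1 - 2 * xp p ^ 2) ≤ 2 * (2 * xp p ^ 2) :=
    neg_log_one_sub_le (by positivity) (by linarith)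
  linarith

noncomputable def Fth (n : ℕ) (p : Nat.Primes) : ℝ := Ath n p * Cth n p
noncomputable def Gp (p : Nat.Primes) : ℝ := Ainf p * Cinf p
noncomputable def phi (n : ℕ) (p : Nat.Primes) : ℝ := Real.log (Fth n p)
noncomputable def gam (p : Nat.Primes) : ℝ := Real.log (Gp p)

lemma Fth_pos (n : ℕ) (p : Nat.Primes) : 0 < Fth n p :=
  mul_pos (Ath_pos n p) (Cth_pos n p)

lemma phi_eq (n : ℕ) (p : Nat.Primes) :
    phi n p = Real.log (Ath n p) + Real.log (Cth n p) :=
  Real.log_mul (Ath_pos n p).ne' (Cth_pos n p).ne'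

lemma abs_phi_le (n : ℕ) (p : Nat.Primes) : |phi n p| ≤ 4 * xp p ^ 2 := by
  rw [phi_eq]
  have h1 := log_Ath_nonneg n p
  have h2 := log_Ath_le n p
  have h3 := log_Cth_nonpos n p
  have h4 := log_Cth_ge n p
  have := xpk_nonneg p 2
  rw [abs_le]
  constructor <;> nlinarith

lemma summable_log_shift (p : Nat.Primes) {m : ℕ} (hm : 1 ≤ m) :
    Summable (fun i : ℕ => Real.log (1 - xp p ^ (m + i))) := by
  refine Summable.of_abs ?_
  refine Summable.of_nonneg_of_le (fun i => abs_nonneg _) (fun i => ?_)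
    ((summable_geometric_of_lt_one (xp_pos p).le (xp_lt_one p)).mul_left (2 * xp p ^ m))
  have hk : 1 ≤ m + i := by omega
  have h1 := one_sub_xpk_pos p hk
  have h2 : Real.log (1 - xp p ^ (m+i)) ≤ 0 :=
    Real.log_nonpos h1.le (by have := xpk_nonneg p (m+i); linarith)
  rw [abs_of_nonpos h2]
  have h3 : ell p (m+i) ≤ 2 * xp p ^ (m+i) := ell_le p hk
  rw [ell] at h3
  calc -Real.log (1 - xp p ^ (m+i)) ≤ 2 * xp p ^ (m+i) := h3
    _ = 2 * xp p ^ m * xp p ^ i := by rw [pow_add]; ring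

lemma one_sub_xp_shift_pos (p : Nat.Primes) {m : ℕ} (hm : 1 ≤ m) (i : ℕ) :
    0 < 1 - xp p ^ (m + i) := one_sub_xpk_pos p (by omega)

lemma multipliable_Cinf (p : Nat.Primes) :
    Multipliable (fun i : ℕ => 1 - xp p ^ (2 + i)) :=
  multipliable_of_summable_log (one_sub_xp_shift_pos p (by norm_num))
    (summable_log_shift p (by norm_num))

lemma Cinf_eq_exp (p : Nat.Primes) :
    Cinf p = Real.exp (∑' i : ℕ, Real.log (1 - xp p ^ (2 + i))) :=
  tprod_eq_exp_tsum_log (one_sub_xp_shift_pos p (by norm_num))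
    (summable_log_shift p (by norm_num))

lemma Cinf_pos (p : Nat.Primes) : 0 < Cinf p := by
  rw [Cinf_eq_exp]; exact Real.exp_pos _

lemma Ainf_pos (p : Nat.Primes) : 0 < Ainf p := by
  have h1 : 0 ≤ xp p ^ 2 / (1 - xp p) :=
    div_nonneg (xpk_nonneg p 2) (one_sub_xp_pos p).le
  rw [Ainf]; linarith

lemma Gp_pos (p : Nat.Primes) : 0 < Gp p := mul_pos (Ainf_pos p) (Cinf_pos p)

lemma tendsto_Ath (p : Nat.Primes) :
    Tendsto (fun n : ℕ => Ath n p) atTop (nhds (Ainf p)) := by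
  have hpow : Tendsto (fun n : ℕ => xp p ^ (n - 1)) atTop (nhds 0) :=
    (tendsto_pow_atTop_nhds_zero_of_lt_one (xp_pos p).le (xp_lt_one p)).comp
      (tendsto_sub_atTop_nat 1)
  have h : Tendsto (fun n : ℕ => 1 + xp p ^ 2 * (1 - xp p ^ (n - 1)) / (1 - xp p)) atTop
      (nhds (1 + xp p ^ 2 * (1 - 0) / (1 - xp p))) :=
    tendsto_const_nhds.add (((tendsto_const_nhds.sub hpow).const_mul _).div_const _)
  simpa [Ainf, Ath, mul_one] using h

lemma tendsto_Cth (p : Nat.Primes) :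
    Tendsto (fun n : ℕ => Cth n p) atTop (nhds (Cinf p)) := by
  have h1 := (multipliable_Cinf p).hasProd.tendsto_prod_nat
  have h2 : Tendsto (fun n : ℕ => n + 1 - 2) atTop atTop :=
    (tendsto_sub_atTop_nat 2).comp (tendsto_add_atTop_nat 1)
  refine (h1.comp h2).congr fun n => ?_
  simp only [Function.comp]
  rw [Cth, ← Finset.Ico_add_one_right_eq_Icc, Finset.prod_Ico_eq_prod_range]

lemma tendsto_Fth (p : Nat.Primes) :
    Tendsto (fun n : ℕ => Fth n p) atTop (nhds (Gp p)) :=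
  (tendsto_Ath p).mul (tendsto_Cth p)

lemma tendsto_phi (p : Nat.Primes) :
    Tendsto (fun n : ℕ => phi n p) atTop (nhds (gam p)) :=
  ((Real.continuousAt_log (Gp_pos p).ne').tendsto).comp (tendsto_Fth p)


/-! ### The limit value -/

lemma log_Cinf (p : Nat.Primes) :
    Real.log (Cinf p) = ∑' i : ℕ, Real.log (1 - xp p ^ (2 + i)) := by
  rw [Cinf_eq_exp, Real.log_exp]

lemma tsum_log_shift_split (p : Nat.Primes) :
    ∑' i : ℕ, Real.log (1 - xp p ^ (2 + i))
      = Real.log (1 - xp p ^ 2) + (Real.log (1 - xp p ^ 3)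
          + ∑' i : ℕ, Real.log (1 - xp p ^ (4 + i))) := by
  have h2 := summable_log_shift p (show 1 ≤ 2 by norm_num)
  have h3 := summable_log_shift p (show 1 ≤ 3 by norm_num)
  have s2 : ∑' i : ℕ, Real.log (1 - xp p ^ (2 + i))
      = Real.log (1 - xp p ^ 2) + ∑' i : ℕ, Real.log (1 - xp p ^ (3 + i)) := by
    rw [Summable.tsum_eq_zero_add h2]
    congr 1
    exact tsum_congr fun i => by rw [show 2 + (i + 1) = 3 + i by omega]
  have s3 : ∑' i : ℕ, Real.log (1 - xp p ^ (3 + i))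
      = Real.log (1 - xp p ^ 3) + ∑' i : ℕ, Real.log (1 - xp p ^ (4 + i)) := by
    rw [Summable.tsum_eq_zero_add h3]
    congr 1
    exact tsum_congr fun i => by rw [show 3 + (i + 1) = 4 + i by omega]
  rw [s2, s3]

lemma gam_eq (p : Nat.Primes) : gam p = -(ell p 6) - ∑' i : ℕ, ell p (i + 4) := by
  have h2pos := one_sub_xpk_pos p (show 1 ≤ 2 by norm_num)
  have h3pos := one_sub_xpk_pos p (show 1 ≤ 3 by norm_num)
  have key : Real.log (Ainf p) + Real.log (1 - xp p ^ 2) + Real.log (1 - xp p ^ 3)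
      = Real.log (1 - xp p ^ 6) := by
    rw [← Real.log_mul (Ainf_pos p).ne' h2pos.ne',
        ← Real.log_mul (mul_pos (Ainf_pos p) h2pos).ne' h3pos.ne']
    congr 1
    rw [Ainf]
    have hx := one_sub_xp_pos p
    field_simp
    ring
  have hshift : ∑' i : ℕ, Real.log (1 - xp p ^ (4 + i)) = -∑' i : ℕ, ell p (i + 4) := by
    rw [← tsum_neg]
    exact tsum_congr fun i => by rw [ell, neg_neg, show i + 4 = 4 + i by omega]
  rw [gam, Gp, Real.log_mul (Ainf_pos p).ne' (Cinf_pos p).ne', log_Cinf,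
    tsum_log_shift_split, hshift, ell, neg_neg]
  linarith

lemma summable_ell_slice (p : Nat.Primes) : Summable (fun i : ℕ => ell p (i + 4)) := by
  refine Summable.of_nonneg_of_le (fun i => ell_nonneg p (by omega)) (fun i => ?_)
    ((summable_geometric_of_lt_one (xp_pos p).le (xp_lt_one p)).mul_left (2 * xp p ^ 4))
  calc ell p (i + 4) ≤ 2 * xp p ^ (i + 4) := ell_le p (by omega)
    _ = 2 * xp p ^ 4 * xp p ^ i := by rw [pow_add]; ring

lemma tsum_ell_slice_le (p : Nat.Primes) : ∑' i : ℕ, ell p (i + 4) ≤ 4 * xp p ^ 2 := by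
  have h1 := Summable.tsum_le_tsum (f := fun i : ℕ => ell p (i + 4))
    (g := fun i : ℕ => 2 * xp p ^ 4 * xp p ^ i)
    (fun i => by
      calc ell p (i + 4) ≤ 2 * xp p ^ (i + 4) := ell_le p (by omega)
        _ = 2 * xp p ^ 4 * xp p ^ i := by rw [pow_add]; ring)
    (summable_ell_slice p)
    ((summable_geometric_of_lt_one (xp_pos p).le (xp_lt_one p)).mul_left (2 * xp p ^ 4))
  have h2 : ∑' i : ℕ, 2 * xp p ^ 4 * xp p ^ i = 2 * xp p ^ 4 * (1 - xp p)⁻¹ := by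
    rw [tsum_mul_left, tsum_geometric_of_lt_one (xp_pos p).le (xp_lt_one p)]
  have h3 : 2 * xp p ^ 4 * (1 - xp p)⁻¹ ≤ 4 * xp p ^ 2 := by
    have hi := one_sub_xp_inv_le_two p
    have hii : (0:ℝ) ≤ (1 - xp p)⁻¹ := (inv_pos.mpr (one_sub_xp_pos p)).le
    have h4 : xp p ^ 4 ≤ xp p ^ 2 := xpk_le_sq p (by norm_num)
    have h5 := xpk_nonneg p 4
    have h6 := xpk_nonneg p 2
    nlinarith
  rw [h2] at h1
  linarith

lemma summable_tsum_ell : Summable (fun p : Nat.Primes => ∑' i : ℕ, ell p (i + 4)) := by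
  refine Summable.of_nonneg_of_le
    (fun p => tsum_nonneg fun i => ell_nonneg p (by omega))
    (fun p => tsum_ell_slice_le p) (summable_xp_sq.mul_left 4)

lemma summable_uncurry_ell :
    Summable (Function.uncurry (fun (p : Nat.Primes) (i : ℕ) => ell p (i + 4))) := by
  refine (summable_prod_of_nonneg ?_).mpr ⟨fun p => summable_ell_slice p, ?_⟩
  · intro q; exact ell_nonneg q.1 (by omega)
  · exact summable_tsum_ell

lemma fubini_ell : ∑' p : Nat.Primes, ∑' i : ℕ, ell p (i + 4)
    = ∑' i : ℕ, ∑' p : Nat.Primes, ell p (i + 4) :=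
  (Summable.tsum_comm' summable_uncurry_ell (fun p => summable_ell_slice p)
    (fun i => summable_ell (by omega))).symm

lemma summable_Ek : Summable (fun i : ℕ => ∑' p : Nat.Primes, ell p (i + 4)) := by
  have h := summable_uncurry_ell.prod_symm
  have := (summable_prod_of_nonneg (fun q : ℕ × Nat.Primes => ell_nonneg q.2 (by omega))).mp h
  exact this.2

lemma tsum_gam : ∑' p : Nat.Primes, gam p
    = -((∑' p : Nat.Primes, ell p 6) + ∑' i : ℕ, ∑' p : Nat.Primes, ell p (i + 4)) := by
  have hsum6 : Summable (fun p : Nat.Primes => ell p 6) := summable_ell (by norm_num)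
  have h1 : ∑' p : Nat.Primes, gam p
      = ∑' p : Nat.Primes, (-(ell p 6) - ∑' i : ℕ, ell p (i + 4)) := tsum_congr gam_eq
  rw [h1, Summable.tsum_sub hsum6.neg summable_tsum_ell, tsum_neg, fubini_ell]
  ring

lemma tprod_zeta : ∏' k : ℕ, zetaNat (k + 4)
    = Real.exp (∑' k : ℕ, ∑' p : Nat.Primes, ell p (k + 4)) := by
  have hz : ∀ k : ℕ, zetaNat (k + 4) = Real.exp (∑' p : Nat.Primes, ell p (k + 4)) :=
    fun k => zetaNat_eq_exp (by omega)
  have hpos : ∀ k : ℕ, 0 < zetaNat (k + 4) := fun k => by rw [hz]; exact Real.exp_pos _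
  have hlog : ∀ k : ℕ, Real.log (zetaNat (k + 4)) = ∑' p : Nat.Primes, ell p (k + 4) :=
    fun k => by rw [hz, Real.log_exp]
  have hs : Summable fun k : ℕ => Real.log (zetaNat (k + 4)) :=
    summable_Ek.congr fun k => (hlog k).symm
  rw [tprod_eq_exp_tsum_log hpos hs]
  congr 1
  exact tsum_congr hlog

lemma target_eq : 1 / (zetaNat 6 * ∏' k : ℕ, zetaNat (k + 4))
    = Real.exp (∑' p : Nat.Primes, gam p) := by
  rw [zetaNat_eq_exp (show 2 ≤ 6 by norm_num), tprod_zeta, ← Real.exp_add, tsum_gam,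
    one_div, ← Real.exp_neg]


/-! ### The finite-n ratio -/

lemma summable_phi (n : ℕ) : Summable (fun p : Nat.Primes => phi n p) := by
  refine Summable.of_abs (Summable.of_nonneg_of_le (fun p => abs_nonneg _)
    (fun p => abs_phi_le n p) (summable_xp_sq.mul_left 4))

lemma summable_log_Ath (n : ℕ) : Summable (fun p : Nat.Primes => Real.log (Ath n p)) :=
  Summable.of_nonneg_of_le (fun p => log_Ath_nonneg n p) (fun p => log_Ath_le n p)
    (summable_xp_sq.mul_left 2)

lemma summable_sum_ell (n : ℕ) :
    Summable (fun p : Nat.Primes => ∑ k ∈ Finset.Icc 2 n, ell p k) := by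
  refine Summable.of_nonneg_of_le
    (fun p => Finset.sum_nonneg fun k hk => ell_nonneg p
      (by have := (Finset.mem_Icc.mp hk).1; omega))
    (fun p => ?_) (summable_xp_sq.mul_left 4)
  have h1 : ∑ k ∈ Finset.Icc 2 n, ell p k ≤ ∑ k ∈ Finset.Icc 2 n, 2 * xp p ^ k :=
    Finset.sum_le_sum fun k hk => ell_le p
      (by have := (Finset.mem_Icc.mp hk).1; omega)
  have h2 : ∑ k ∈ Finset.Icc 2 n, 2 * xp p ^ k
      = 2 * ∑ k ∈ Finset.Icc 2 n, xp p ^ k := by rw [Finset.mul_sum]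
  have h3 := sum_xpk_Icc_le p n
  calc ∑ k ∈ Finset.Icc 2 n, ell p k ≤ 2 * ∑ k ∈ Finset.Icc 2 n, xp p ^ k := by
        rw [← h2]; exact h1
    _ ≤ 2 * (2 * xp p ^ 2) := by linarith
    _ = 4 * xp p ^ 2 := by ring

lemma log_Cth_eq (n : ℕ) (p : Nat.Primes) :
    Real.log (Cth n p) = -∑ k ∈ Finset.Icc 2 n, ell p k := by
  rw [Cth, Real.log_prod (fun k hk => (one_sub_xpk_pos p
    (by have := (Finset.mem_Icc.mp hk).1; omega)).ne')]
  rw [← Finset.sum_neg_distrib]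
  exact Finset.sum_congr rfl fun k hk => by rw [ell, neg_neg]

lemma prod_zeta_eq (n : ℕ) :
    ∏ k ∈ Finset.Icc 2 n, zetaNat k
      = Real.exp (∑' p : Nat.Primes, ∑ k ∈ Finset.Icc 2 n, ell p k) := by
  have h1 : ∏ k ∈ Finset.Icc 2 n, zetaNat k
      = ∏ k ∈ Finset.Icc 2 n, Real.exp (∑' p : Nat.Primes, ell p k) :=
    Finset.prod_congr rfl fun k hk => zetaNat_eq_exp (Finset.mem_Icc.mp hk).1
  rw [h1, ← Real.exp_sum]
  congr 1
  exact (Summable.tsum_finsetSum fun k hk => summable_ell (Finset.mem_Icc.mp hk).1).symm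

lemma theta_factor_eq (n : ℕ) (hn : 1 ≤ n) (p : Nat.Primes) :
    1 + (((p : ℕ) : ℝ) ^ (n - 1) - 1) / (((p : ℕ) : ℝ) ^ (n + 1) - ((p : ℕ) : ℝ) ^ n)
      = Ath n p := by
  obtain ⟨m, rfl⟩ : ∃ m, n = m + 1 := ⟨n - 1, by omega⟩
  set q : ℝ := ((p : ℕ) : ℝ) with hqdef
  have hq : 2 ≤ q := two_le_p p
  have hq0 : 0 < q := by linarith
  have hq1 : 1 < q := by linarith
  have hqm : 0 < q ^ m := pow_pos hq0 m
  rw [Ath]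
  congr 1
  have hx : xp p = q⁻¹ := rfl
  rw [hx]
  have e1 : m + 1 - 1 = m := by omega
  rw [e1]
  have hden : q ^ (m + 1 + 1) - q ^ (m + 1) = q ^ (m + 1) * (q - 1) := by ring
  have hinv : (1 : ℝ) - q⁻¹ ≠ 0 := by
    have : q⁻¹ < 1 := inv_lt_one_of_one_lt₀ hq1
    linarith
  rw [hden]
  have hq1' : q - 1 ≠ 0 := sub_ne_zero.mpr hq1.ne'
  have hqq : q ^ m * q⁻¹ ^ m = 1 := by rw [← mul_pow, mul_inv_cancel₀ hq0.ne', one_pow]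
  field_simp
  linear_combination q * hqq

lemma theta_eq (n : ℕ) (hn : 1 ≤ n) : thetaN n = ∏' p : Nat.Primes, Ath n p := by
  rw [thetaN]
  exact tprod_congr fun p => theta_factor_eq n hn p

lemma ratio_eq (n : ℕ) (hn : 1 ≤ n) :
    thetaN n / ∏ k ∈ Finset.Icc 2 n, zetaNat k
      = Real.exp (∑' p : Nat.Primes, phi n p) := by
  have h2 : ∏' p : Nat.Primes, Ath n p
      = Real.exp (∑' p : Nat.Primes, Real.log (Ath n p)) :=
    tprod_eq_exp_tsum_log (fun p => Ath_pos n p) (summable_log_Ath n)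
  have h3 : ∀ p : Nat.Primes,
      Real.log (Ath n p) = phi n p + ∑ k ∈ Finset.Icc 2 n, ell p k := by
    intro p
    rw [phi_eq, log_Cth_eq]
    ring
  have h4 : ∑' p : Nat.Primes, Real.log (Ath n p)
      = (∑' p : Nat.Primes, phi n p)
        + ∑' p : Nat.Primes, ∑ k ∈ Finset.Icc 2 n, ell p k := by
    rw [tsum_congr h3, Summable.tsum_add (summable_phi n) (summable_sum_ell n)]
  rw [theta_eq n hn, h2, h4, prod_zeta_eq, ← Real.exp_sub]
  congr 1
  ring

lemma main_tendsto :
    Tendsto (fun n : ℕ => ∑' p : Nat.Primes, phi n p) atTop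
      (nhds (∑' p : Nat.Primes, gam p)) := by
  refine tendsto_tsum_of_dominated_convergence (bound := fun p : Nat.Primes => 4 * xp p ^ 2)
    (summable_xp_sq.mul_left 4) (fun p => tendsto_phi p) ?_
  exact Eventually.of_forall fun n p => by
    simpa [Real.norm_eq_abs] using abs_phi_le n p

end CocyclicAux


/-- As `n → ∞`, the density `ϑ_n / ∏_{k=2}^n ζ(k)` converges to
`1/(ζ(6) · ∏_{k=4}^∞ ζ(k)) ≈ 0.85`. -/
theorem cocyclic_density_limit :
    Tendsto (fun n : ℕ => thetaN n / ∏ k ∈ Finset.Icc 2 n, zetaNat k) atTop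
      (nhds (1 / (zetaNat 6 * ∏' k : ℕ, zetaNat (k + 4)))) := by
  have hexp := (Real.continuous_exp.tendsto _).comp CocyclicAux.main_tendsto
  rw [CocyclicAux.target_eq]
  refine Tendsto.congr' ?_ hexp
  filter_upwards [eventually_ge_atTop 1] with n hn
  exact (CocyclicAux.ratio_eq n hn).symm
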